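/- arXiv:2605.31019 — 5 statements merged into one kernel-verified Lean document; each statement's English description precedes it below -/
import Mathlib

section
/- For each m ∈ [2,k], the operator T^m_μ := ∂_1 ∂_{m−1} + ∂_m (E + μ), where E := Σ_{h=1}^k σ_h ∂_h, annihilates P_σ(a)^{−μ} for every fixed a (with |a| large enough). -/
open Finset

noncomputable section

/-- The partial derivative `∂_h` (with respect to the variable `σ_h`) of a function of
`σ = (σ_0, σ_1, σ_2, …)`. -/
def pd (h : ℕ) (f : (ℕ → ℂ) → ℂ) : (ℕ → ℂ) → ℂ :=
  fun σ => deriv (fun t => f (Function.update σ h t)) (σ h)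

/-- `P_σ(a) := a^k + Σ_{h=1}^k (-1)^h σ_h a^{k-h}`. -/
def Pfun (k : ℕ) (σ : ℕ → ℂ) (a : ℂ) : ℂ :=
  a ^ k + ∑ h ∈ Icc 1 k, (-1 : ℂ) ^ h * σ h * a ^ (k - h)

/-- The branch `P_σ(a)^{-μ} := exp (-μ Log (P_σ(a)))` as a function of `σ` (with `a` fixed). -/
def fpow (k : ℕ) (μ a : ℂ) (σ : ℕ → ℂ) : ℂ :=
  Complex.exp (-μ * Complex.log (Pfun k σ a))

namespace TmAux

/-- `g h := ∂_h P = (-1)^h a^(k-h)`. -/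
def g (k : ℕ) (a : ℂ) (h : ℕ) : ℂ := (-1) ^ h * a ^ (k - h)

lemma P_update (k : ℕ) (a : ℂ) (σ : ℕ → ℂ) {h : ℕ} (hh : h ∈ Icc 1 k) (t : ℂ) :
    Pfun k (Function.update σ h t) a = Pfun k σ a + g k a h * (t - σ h) := by
  unfold Pfun g
  have key : ∑ j ∈ Icc 1 k, (-1:ℂ)^j * Function.update σ h t j * a ^ (k - j)
      - ∑ j ∈ Icc 1 k, (-1:ℂ)^j * σ j * a ^ (k - j)
      = (-1:ℂ)^h * a^(k-h) * (t - σ h) := by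
    rw [← Finset.sum_sub_distrib, Finset.sum_eq_single h]
    · simp only [Function.update_self]; ring
    · intro j _ hne; simp [Function.update_of_ne hne]
    · intro h'; exact absurd hh h'
  linear_combination key

lemma fpow_succ (k : ℕ) (μ a : ℂ) (σ : ℕ → ℂ) (hs : Pfun k σ a ∈ Complex.slitPlane) :
    fpow k μ a σ = Pfun k σ a * fpow k (μ+1) a σ := by
  have hne : Pfun k σ a ≠ 0 := Complex.slitPlane_ne_zero hs
  calc fpow k μ a σ
      = Complex.exp (Complex.log (Pfun k σ a) + -(μ+1) * Complex.log (Pfun k σ a)) := by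
        unfold fpow; congr 1; ring
    _ = Pfun k σ a * fpow k (μ+1) a σ := by
        rw [Complex.exp_add, Complex.exp_log hne]; rfl

lemma hasDerivAt_line (k : ℕ) (μ a : ℂ) (σ : ℕ → ℂ) {h : ℕ} (hh : h ∈ Icc 1 k)
    (hs : Pfun k σ a ∈ Complex.slitPlane) :
    HasDerivAt (fun t => fpow k μ a (Function.update σ h t))
      (-μ * g k a h * fpow k (μ+1) a σ) (σ h) := by
  have hne : Pfun k σ a ≠ 0 := Complex.slitPlane_ne_zero hs
  have h1 : HasDerivAt (fun t : ℂ => Pfun k (Function.update σ h t) a) (g k a h) (σ h) := by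
    have base : HasDerivAt (fun t : ℂ => Pfun k σ a + g k a h * (t - σ h)) (g k a h) (σ h) := by
      simpa using (((hasDerivAt_id (σ h)).sub_const (σ h)).const_mul (g k a h)).const_add
        (Pfun k σ a)
    exact base.congr_of_eventuallyEq
      (Filter.Eventually.of_forall fun t => P_update k a σ hh t)
  have hupd : Function.update σ h (σ h) = σ := Function.update_eq_self h σ
  have hlog : HasDerivAt Complex.log (Pfun k σ a)⁻¹
      ((fun t : ℂ => Pfun k (Function.update σ h t) a) (σ h)) := by
    simpa [hupd] using Complex.hasDerivAt_log hs
  have h2 := hlog.comp (σ h) h1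
  have h3 := h2.const_mul (-μ)
  have h4 := h3.cexp
  have hf : fpow k (μ+1) a σ
      = (Pfun k σ a)⁻¹ * Complex.exp (-μ * Complex.log (Pfun k σ a)) := by
    unfold fpow
    rw [show -(μ+1) * Complex.log (Pfun k σ a)
        = -Complex.log (Pfun k σ a) + -μ * Complex.log (Pfun k σ a) by ring,
      Complex.exp_add, Complex.exp_neg, Complex.exp_log hne]
  simp only [Function.comp_def, hupd] at h4
  have h5 : HasDerivAt (fun t => fpow k μ a (Function.update σ h t))
      (Complex.exp (-μ * Complex.log (Pfun k σ a)) * (-μ * ((Pfun k σ a)⁻¹ * g k a h)))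
      (σ h) := h4
  convert h5 using 1
  rw [hf]; ring

lemma pd_fpow (k : ℕ) (μ a : ℂ) (σ : ℕ → ℂ) {h : ℕ} (hh : h ∈ Icc 1 k)
    (hs : Pfun k σ a ∈ Complex.slitPlane) :
    pd h (fpow k μ a) σ = -μ * g k a h * fpow k (μ+1) a σ :=
  (hasDerivAt_line k μ a σ hh hs).deriv

end TmAux

open TmAux in
/-- For each `m ∈ [2,k]`, the operator `T^m_μ := ∂_1 ∂_{m-1} + ∂_m (E + μ)`
(with `E := Σ_{h=1}^k σ_h ∂_h`) annihilates `P_σ(a)^{-μ}` on every open domain on which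
a branch of `P_σ(a)^{-μ}` is defined. -/
theorem Tm_annihilates_Ppow (k : ℕ) (μ a : ℂ) (m : ℕ) (hm : m ∈ Icc 2 k)
    (U : Set (ℕ → ℂ)) (hU : IsOpen U) (hP : ∀ σ ∈ U, Pfun k σ a ∈ Complex.slitPlane)
    (σ : ℕ → ℂ) (hσ : σ ∈ U) :
    pd 1 (pd (m - 1) (fpow k μ a)) σ +
      pd m (fun τ => ∑ h ∈ Icc 1 k, τ h * pd h (fpow k μ a) τ + μ * fpow k μ a τ) σ = 0 := by
  obtain ⟨hm2, hmk⟩ := mem_Icc.mp hm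
  have h1k : (1:ℕ) ∈ Icc 1 k := by rw [mem_Icc]; omega
  have hm1 : m - 1 ∈ Icc 1 k := by rw [mem_Icc]; omega
  have hmIk : m ∈ Icc 1 k := by rw [mem_Icc]; omega
  have hsσ := hP σ hσ
  have hcont : ∀ h : ℕ, Continuous (fun t : ℂ => Function.update σ h t) := by
    intro h
    apply continuous_pi
    intro j
    simp only [Function.update_apply]
    by_cases hj : j = h
    · simpa [hj] using continuous_id'
    · simpa [hj] using continuous_const
  have hev : ∀ h : ℕ, ∀ᶠ t in nhds (σ h), Function.update σ h t ∈ U := by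
    intro h
    have : (fun t : ℂ => Function.update σ h t) ⁻¹' U ∈ nhds (σ h) := by
      apply (hcont h).continuousAt.preimage_mem_nhds
      rw [Function.update_eq_self]
      exact hU.mem_nhds hσ
    exact this
  -- first term
  have hterm1 : pd 1 (pd (m-1) (fpow k μ a)) σ
      = -μ * g k a (m-1) * (-(μ+1) * g k a 1 * fpow k (μ+1+1) a σ) := by
    have base : HasDerivAt
        (fun t => -μ * g k a (m-1) * fpow k (μ+1) a (Function.update σ 1 t))
        (-μ * g k a (m-1) * (-(μ+1) * g k a 1 * fpow k (μ+1+1) a σ)) (σ 1) :=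
      (hasDerivAt_line k (μ+1) a σ h1k hsσ).const_mul (-μ * g k a (m-1))
    have key : HasDerivAt (fun t => pd (m-1) (fpow k μ a) (Function.update σ 1 t))
        (-μ * g k a (m-1) * (-(μ+1) * g k a 1 * fpow k (μ+1+1) a σ)) (σ 1) := by
      apply base.congr_of_eventuallyEq
      filter_upwards [hev 1] with t ht
      exact pd_fpow k μ a _ hm1 (hP _ ht)
    exact key.deriv
  -- second term
  have hterm2 : pd m (fun τ => ∑ h ∈ Icc 1 k, τ h * pd h (fpow k μ a) τ + μ * fpow k μ a τ) σ
      = μ * a ^ k * (-(μ+1) * g k a m * fpow k (μ+1+1) a σ) := by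
    have base : HasDerivAt
        (fun t => μ * a ^ k * fpow k (μ+1) a (Function.update σ m t))
        (μ * a ^ k * (-(μ+1) * g k a m * fpow k (μ+1+1) a σ)) (σ m) :=
      (hasDerivAt_line k (μ+1) a σ hmIk hsσ).const_mul (μ * a ^ k)
    have key : HasDerivAt
        (fun t => ∑ h ∈ Icc 1 k, (Function.update σ m t) h
            * pd h (fpow k μ a) (Function.update σ m t)
          + μ * fpow k μ a (Function.update σ m t))
        (μ * a ^ k * (-(μ+1) * g k a m * fpow k (μ+1+1) a σ)) (σ m) := by
      apply base.congr_of_eventuallyEq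
      filter_upwards [hev m] with t ht
      set τ := Function.update σ m t with hτ
      have hsτ := hP τ ht
      have hPτ : Pfun k τ a = a ^ k + ∑ h ∈ Icc 1 k, τ h * g k a h := by
        unfold Pfun g
        congr 1
        apply Finset.sum_congr rfl
        intro j _
        ring
      calc ∑ h ∈ Icc 1 k, τ h * pd h (fpow k μ a) τ + μ * fpow k μ a τ
          = ∑ h ∈ Icc 1 k, τ h * (-μ * g k a h * fpow k (μ+1) a τ)
            + μ * (Pfun k τ a * fpow k (μ+1) a τ) := by
            rw [← fpow_succ k μ a τ hsτ]
            congr 1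
            apply Finset.sum_congr rfl
            intro j hj
            rw [pd_fpow k μ a τ hj hsτ]
        _ = μ * a ^ k * fpow k (μ+1) a τ := by
            have hsum : ∑ h ∈ Icc 1 k, τ h * (-μ * g k a h * fpow k (μ+1) a τ)
                = -μ * fpow k (μ+1) a τ * ∑ h ∈ Icc 1 k, τ h * g k a h := by
              rw [Finset.mul_sum]
              apply Finset.sum_congr rfl
              intro j _
              ring
            rw [hsum, hPτ]
            ring
    exact key.deriv
  have hg : g k a 1 * g k a (m-1) = a ^ k * g k a m := by
    unfold g
    have e1 : 1 + (m-1) = m := by omega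
    have e2 : (k-1) + (k-(m-1)) = k + (k-m) := by omega
    calc (-1:ℂ)^1 * a^(k-1) * ((-1:ℂ)^(m-1) * a^(k-(m-1)))
        = (-1:ℂ)^(1+(m-1)) * a^((k-1)+(k-(m-1))) := by rw [pow_add, pow_add]; ring
      _ = a ^ k * ((-1:ℂ)^m * a^(k-m)) := by rw [e1, e2, pow_add]; ring
  rw [hterm1, hterm2]
  linear_combination μ * (μ+1) * fpow k (μ+1+1) a σ * hg
end
end

section
/- The operators U_{−1} := Σ_{h=0}^{k−1}(k−h)σ_h ∂_{h+1} (with σ_0 = 1), 2U_0 + kμ := 2Σ_{h=1}^k h σ_h ∂_h + kμ, and U_1 + μσ_1 := Σ_{h=1}^k (σ_1σ_h − (h+1)σ_{h+1})∂_h + μσ_1 (with σ_{k+1} = 0) satisfy the sl_2 commutation relations: [2U_0+kμ, U_{−1}] = −2U_{−1}, [2U_0+kμ, U_1+μσ_1] = 2(U_1+μσ_1), and [U_{−1}, U_1+μσ_1] = 2U_0 + kμ. -/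
open MvPolynomial Finset

noncomputable section

/-- Polynomials in the variables `σ_1, …, σ_k` (we use `ℕ`-indexed variables,
the variable `X h` playing the role of `σ_h`). -/
abbrev WPoly : Type := MvPolynomial ℕ ℂ

/-- The partial derivative `∂_h = ∂/∂σ_h` as a linear endomorphism. -/
def Dop (h : ℕ) : Module.End ℂ WPoly := (MvPolynomial.pderiv h).toLinearMap

/-- Multiplication by a polynomial as a linear endomorphism. -/
def Mop (p : WPoly) : Module.End ℂ WPoly := LinearMap.mulLeft ℂ p

/-- `σ_h`, with the conventions `σ_0 = 1` and `σ_h = 0` for `h > k`. -/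
def sig (k h : ℕ) : WPoly := if h = 0 then 1 else if h ≤ k then X h else 0

/-- The Euler operator `E := Σ_{h=1}^k σ_h ∂_h`. -/
def Eop (k : ℕ) : Module.End ℂ WPoly := ∑ h ∈ Icc 1 k, Mop (X h) * Dop h

/-- `U_0 := Σ_{h=1}^k h σ_h ∂_h`. -/
def U0op (k : ℕ) : Module.End ℂ WPoly := ∑ h ∈ Icc 1 k, (h : ℂ) • (Mop (X h) * Dop h)

/-- `U_{-1} := Σ_{h=0}^{k-1} (k-h) σ_h ∂_{h+1}` (with `σ_0 = 1`). -/
def Um1op (k : ℕ) : Module.End ℂ WPoly :=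
  ∑ h ∈ range k, ((k - h : ℕ) : ℂ) • (Mop (sig k h) * Dop (h + 1))

/-- `U_1 := Σ_{h=1}^k (σ_1 σ_h - (h+1) σ_{h+1}) ∂_h` (with `σ_{k+1} = 0`). -/
def U1op (k : ℕ) : Module.End ℂ WPoly :=
  ∑ h ∈ Icc 1 k, Mop (X 1 * X h - ((h + 1 : ℕ) : ℂ) • sig k (h + 1)) * Dop h

/-- `T^m_μ := ∂_1 ∂_{m-1} + ∂_m (E + μ)`. -/
def Tmu (k : ℕ) (μ : ℂ) (m : ℕ) : Module.End ℂ WPoly :=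
  Dop 1 * Dop (m - 1) + Dop m * (Eop k + μ • (1 : Module.End ℂ WPoly))

/-- `A_{p,q} := ∂_p ∂_q - ∂_{p+1} ∂_{q-1}`. -/
def Aop (p q : ℕ) : Module.End ℂ WPoly := Dop p * Dop q - Dop (p + 1) * Dop (q - 1)

/-- The weight `w(α) := Σ_j j·α_j` of an exponent. -/
def wt (α : ℕ →₀ ℕ) : ℕ := ∑ j ∈ α.support, j * α j

/-- The weight-`r` homogeneous part of a polynomial (`σ_h` has weight `h`). -/
def weightPart (r : ℕ) (p : WPoly) : WPoly :=
  ∑ α ∈ p.support.filter (fun α => wt α = r), monomial α (coeff α p)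

/-- `m̃_{q,r}(σ) := q! Σ_{|α| = q, w(α) = r} σ^α / α!`. -/
def mtilde (k q r : ℕ) : WPoly :=
  (q.factorial : ℂ) •
    ∑ α ∈ (Finset.Nat.antidiagonalTuple k q).filter
        (fun α => ∑ j : Fin k, ((j : ℕ) + 1) * α j = r),
      (((∏ j : Fin k, Nat.factorial (α j)) : ℕ) : ℂ)⁻¹ • ∏ j : Fin k, X ((j : ℕ) + 1) ^ α j

/-- `x := Σ_{h=1}^k (-1)^h σ_h`. -/
def xpoly (k : ℕ) : WPoly := ∑ h ∈ Icc 1 k, C ((-1 : ℂ) ^ h) * X h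

/-- `Γ_{μ,p} := (-1)^p μ(μ+1)⋯(μ+p-1)/p!`, the coefficient of `x^p` in `(1+x)^{-μ}`. -/
def GammaC (μ : ℂ) (p : ℕ) : ℂ := (-1 : ℂ) ^ p * (∏ i ∈ range p, (μ + i)) / (p.factorial : ℂ)

/-- `Φ_{μ,q}` : the weight-`q` part of the Taylor expansion at `σ = 0` of
`(1 + Σ_{h=1}^k (-1)^h σ_h)^{-μ}`.  Since the weight-`q` part of `x^p` vanishes for
`p > q`, it suffices to truncate the series at order `q`. -/
def Phi (k : ℕ) (μ : ℂ) (q : ℕ) : WPoly :=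
  weightPart q (∑ p ∈ range (q + 1), GammaC μ p • xpoly k ^ p)

/-- `P_σ(a) := a^k + Σ_{h=1}^k (-1)^h σ_h a^{k-h}` as a polynomial in `σ` (with `a ∈ ℂ` fixed). -/
def Ppol (k : ℕ) (a : ℂ) : WPoly :=
  C (a ^ k) + ∑ h ∈ Icc 1 k, C ((-1 : ℂ) ^ h * a ^ (k - h)) * X h

/-- `P'_σ(a) = ∂P_σ(a)/∂a` as a polynomial in `σ`. -/
def PpolDeriv (k : ℕ) (a : ℂ) : WPoly :=
  C ((k : ℂ) * a ^ (k - 1)) +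
    ∑ h ∈ Icc 1 k, C ((-1 : ℂ) ^ h * ((k - h : ℕ) : ℂ) * a ^ (k - h - 1)) * X h



namespace Sl2Aux

@[simp] lemma Dop_apply (i : ℕ) (f : WPoly) : Dop i f = pderiv i f := rfl
@[simp] lemma Mop_apply (p f : WPoly) : Mop p f = p * f := rfl

lemma MD_apply (p : WPoly) (i : ℕ) (f : WPoly) : (Mop p * Dop i) f = p * pderiv i f := rfl

lemma smul_MD_apply (c : ℂ) (p : WPoly) (i : ℕ) (f : WPoly) :
    (c • (Mop p * Dop i)) f = c • (p * pderiv i f) := rfl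

/-- Leibniz rule for sums of first order operators. -/
lemma leib_sum (s : Finset ℕ) (c : ℕ → ℂ) (p : ℕ → WPoly) (ι : ℕ → ℕ) (f g : WPoly) :
    (∑ h ∈ s, c h • (Mop (p h) * Dop (ι h))) (f * g)
      = f * ((∑ h ∈ s, c h • (Mop (p h) * Dop (ι h))) g)
        + g * ((∑ h ∈ s, c h • (Mop (p h) * Dop (ι h))) f) := by
  simp only [LinearMap.sum_apply, smul_MD_apply, Finset.mul_sum, ← Finset.sum_add_distrib]
  refine Finset.sum_congr rfl fun h _ => ?_
  rw [pderiv_mul, mul_smul_comm, mul_smul_comm, ← smul_add]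
  exact congrArg (c h • ·) (by ring)

lemma one_sum (s : Finset ℕ) (c : ℕ → ℂ) (p : ℕ → WPoly) (ι : ℕ → ℕ) :
    (∑ h ∈ s, c h • (Mop (p h) * Dop (ι h))) 1 = 0 := by
  simp only [LinearMap.sum_apply, smul_MD_apply, pderiv_one, mul_zero, smul_zero,
    Finset.sum_const_zero]

lemma U1op_eq (k : ℕ) : U1op k = ∑ h ∈ Icc 1 k,
    (1:ℂ) • (Mop (X 1 * X h - ((h + 1 : ℕ) : ℂ) • sig k (h + 1)) * Dop h) := by
  simp [U1op]

lemma U0_mul (k : ℕ) (f g : WPoly) :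
    U0op k (f * g) = f * U0op k g + g * U0op k f := leib_sum _ _ _ _ f g
lemma U0_one (k : ℕ) : U0op k 1 = 0 := one_sum _ _ _ _
lemma Um1_mul (k : ℕ) (f g : WPoly) :
    Um1op k (f * g) = f * Um1op k g + g * Um1op k f := leib_sum _ _ _ _ f g
lemma Um1_one (k : ℕ) : Um1op k 1 = 0 := one_sum _ _ _ _
lemma U1_mul (k : ℕ) (f g : WPoly) :
    U1op k (f * g) = f * U1op k g + g * U1op k f := by
  rw [U1op_eq]; exact leib_sum _ _ _ _ f g
lemma U1_one (k : ℕ) : U1op k 1 = 0 := by rw [U1op_eq]; exact one_sum _ _ _ _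

lemma U0_X (k j : ℕ) :
    U0op k (X j) = if 1 ≤ j ∧ j ≤ k then ((j : ℕ) : ℂ) • X j else 0 := by
  have hpt : ∀ h ∈ Icc 1 k, ((h:ℂ) • (Mop (X h) * Dop h)) (X j)
      = if h = j then ((j : ℕ) : ℂ) • (X j : WPoly) else 0 := by
    intro h _
    by_cases hj : h = j
    · subst hj; rw [smul_MD_apply, pderiv_X_self, if_pos rfl, mul_one]
    · rw [smul_MD_apply, pderiv_X_of_ne (Ne.symm hj), if_neg hj, mul_zero, smul_zero]
  rw [U0op, LinearMap.sum_apply, Finset.sum_congr rfl hpt, Finset.sum_ite_eq' (Icc 1 k) j]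
  simp [Finset.mem_Icc]

lemma Um1_X (k j : ℕ) :
    Um1op k (X j) = if 1 ≤ j ∧ j ≤ k then ((k + 1 - j : ℕ) : ℂ) • sig k (j - 1) else 0 := by
  rcases Nat.eq_zero_or_pos j with hj0 | hj0
  · subst hj0
    rw [Um1op, LinearMap.sum_apply, Finset.sum_eq_zero fun h _ => ?_]
    · simp
    · rw [smul_MD_apply, pderiv_X_of_ne (by omega), mul_zero, smul_zero]
  · have hpt : ∀ h ∈ range k, (((k - h : ℕ):ℂ) • (Mop (sig k h) * Dop (h+1))) (X j)
        = if h = j - 1 then ((k + 1 - j : ℕ) : ℂ) • sig k (j - 1) else 0 := by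
      intro h _
      by_cases hj : h = j - 1
      · subst hj
        rw [smul_MD_apply, show j - 1 + 1 = j from by omega, pderiv_X_self, mul_one,
          if_pos rfl, show k - (j-1) = k + 1 - j from by omega]
      · rw [smul_MD_apply, pderiv_X_of_ne (by omega), mul_zero, smul_zero, if_neg hj]
    rw [Um1op, LinearMap.sum_apply, Finset.sum_congr rfl hpt,
      Finset.sum_ite_eq' (range k) (j - 1)]
    rcases le_or_gt j k with h | h
    · rw [if_pos (by simpa [Finset.mem_range] using by omega), if_pos ⟨hj0, h⟩]
    · rw [if_neg (by simpa [Finset.mem_range] using by omega), if_neg (by omega)]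

lemma U1_X (k j : ℕ) :
    U1op k (X j) = if 1 ≤ j ∧ j ≤ k then
      X 1 * X j - ((j + 1 : ℕ) : ℂ) • sig k (j + 1) else 0 := by
  have hpt : ∀ h ∈ Icc 1 k, (Mop (X 1 * X h - ((h + 1 : ℕ) : ℂ) • sig k (h + 1)) * Dop h) (X j)
      = if h = j then X 1 * X j - ((j + 1 : ℕ) : ℂ) • sig k (j + 1) else 0 := by
    intro h _
    by_cases hj : h = j
    · subst hj; rw [MD_apply, pderiv_X_self, mul_one, if_pos rfl]
    · rw [MD_apply, pderiv_X_of_ne (Ne.symm hj), mul_zero, if_neg hj]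
  rw [U1op, LinearMap.sum_apply, Finset.sum_congr rfl hpt, Finset.sum_ite_eq' (Icc 1 k) j]
  simp [Finset.mem_Icc]

lemma sig_zero (k : ℕ) : sig k 0 = 1 := by simp [sig]
lemma sig_eq_X {k j : ℕ} (h1 : 1 ≤ j) (h2 : j ≤ k) : sig k j = X j := by
  simp [sig, h2]; omega
lemma sig_eq_zero {k j : ℕ} (h : k < j) : sig k j = 0 := by
  have : ¬ j ≤ k := by omega
  simp [sig, this]; omega

lemma U0_sig (k j : ℕ) : U0op k (sig k j) = ((j : ℕ) : ℂ) • sig k j := by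
  rcases Nat.eq_zero_or_pos j with rfl | h1
  · rw [sig_zero, U0_one]; simp
  · rcases le_or_gt j k with h2 | h2
    · rw [sig_eq_X h1 h2, U0_X, if_pos ⟨h1, h2⟩]
    · rw [sig_eq_zero h2, map_zero, smul_zero]

lemma Um1_sig_succ {k j : ℕ} (h1 : 1 ≤ j) (h2 : j ≤ k) :
    Um1op k (sig k (j + 1)) = ((k - j : ℕ) : ℂ) • sig k j := by
  rcases lt_or_eq_of_le h2 with h | rfl
  · rw [sig_eq_X (by omega) (by omega), Um1_X, if_pos ⟨by omega, by omega⟩,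
      show k + 1 - (j + 1) = k - j from by omega, show j + 1 - 1 = j from rfl]
  · rw [sig_eq_zero (by omega), map_zero, Nat.sub_self]; simp

/-- Build a derivation from an endomorphism satisfying the Leibniz rule. -/
def toDer (L : Module.End ℂ WPoly) (h1 : L 1 = 0)
    (hL : ∀ f g : WPoly, L (f * g) = f * L g + g * L f) : Derivation ℂ WPoly WPoly :=
  { toLinearMap := L
    map_one_eq_zero' := h1
    leibniz' := fun a b => by simpa [smul_eq_mul] using hL a b }

@[simp] lemma toDer_apply (L : Module.End ℂ WPoly) (h1) (hL) (f : WPoly) :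
    toDer L h1 hL f = L f := rfl

@[simp] lemma toDer_coe (L : Module.End ℂ WPoly) (h1) (hL) :
    ((toDer L h1 hL : Derivation ℂ WPoly WPoly) : WPoly →ₗ[ℂ] WPoly) = L := rfl

def U0der (k : ℕ) : Derivation ℂ WPoly WPoly := toDer (U0op k) (U0_one k) (U0_mul k)
def Um1der (k : ℕ) : Derivation ℂ WPoly WPoly := toDer (Um1op k) (Um1_one k) (Um1_mul k)
def U1der (k : ℕ) : Derivation ℂ WPoly WPoly := toDer (U1op k) (U1_one k) (U1_mul k)

lemma key1 (k : ℕ) : U0op k * Um1op k - Um1op k * U0op k = (-1 : ℂ) • Um1op k := by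
  have h : ⁅U0der k, Um1der k⁆ = (-1 : ℂ) • Um1der k := by
    apply MvPolynomial.derivation_ext
    intro j
    rw [Derivation.commutator_apply, Derivation.smul_apply]
    show U0op k (Um1op k (X j)) - Um1op k (U0op k (X j)) = (-1 : ℂ) • Um1op k (X j)
    rw [Um1_X, U0_X]
    by_cases hj : 1 ≤ j ∧ j ≤ k
    · rw [if_pos hj, if_pos hj, map_smul, map_smul, Um1_X, if_pos hj, U0_sig,
        smul_smul, smul_smul, smul_smul, ← sub_smul]
      congr 1
      push_cast [Nat.cast_sub (show j ≤ k + 1 by omega), Nat.cast_sub hj.1]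
      ring
    · rw [if_neg hj, if_neg hj, map_zero, map_zero, smul_zero, sub_zero]
  have h2 := congrArg (fun D : Derivation ℂ WPoly WPoly => (D : WPoly →ₗ[ℂ] WPoly)) h
  simpa [Derivation.commutator_coe_linear_map, Ring.lie_def,
    Derivation.coe_smul_linearMap, U0der, Um1der] using h2

lemma key2a (k : ℕ) (hk : 1 ≤ k) : U0op k * U1op k - U1op k * U0op k = U1op k := by
  have h : ⁅U0der k, U1der k⁆ = U1der k := by
    apply MvPolynomial.derivation_ext
    intro j
    rw [Derivation.commutator_apply]
    show U0op k (U1op k (X j)) - U1op k (U0op k (X j)) = U1op k (X j)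
    rw [U1_X, U0_X]
    by_cases hj : 1 ≤ j ∧ j ≤ k
    · rw [if_pos hj, if_pos hj, map_sub, map_smul, map_smul, U0_mul, U0_X k j,
        if_pos hj, U0_X k 1, if_pos ⟨le_rfl, hk⟩, U0_sig, U1_X, if_pos hj]
      simp only [smul_eq_C_mul]
      push_cast
      simp only [map_add, map_one, map_ofNat]
      ring
    · rw [if_neg hj, if_neg hj, map_zero, map_zero]; simp
  have h2 := congrArg (fun D : Derivation ℂ WPoly WPoly => (D : WPoly →ₗ[ℂ] WPoly)) h
  simpa [Derivation.commutator_coe_linear_map, Ring.lie_def, U0der, U1der] using h2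

lemma key3 (k : ℕ) (hk : 1 ≤ k) :
    Um1op k * U1op k - U1op k * Um1op k = (2 : ℂ) • U0op k := by
  have h : ⁅Um1der k, U1der k⁆ = (2 : ℂ) • U0der k := by
    apply MvPolynomial.derivation_ext
    intro j
    rw [Derivation.commutator_apply, Derivation.smul_apply]
    show Um1op k (U1op k (X j)) - U1op k (Um1op k (X j)) = (2 : ℂ) • U0op k (X j)
    rw [U1_X, Um1_X, U0_X]
    by_cases hj : 1 ≤ j ∧ j ≤ k
    · rw [if_pos hj, if_pos hj, if_pos hj, map_sub, map_smul, map_smul, Um1_mul,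
        Um1_X k 1, if_pos ⟨le_rfl, hk⟩, Um1_X k j, if_pos hj,
        Um1_sig_succ hj.1 hj.2, show k + 1 - 1 = k from by omega, sig_zero]
      by_cases hj1 : j = 1
      · subst hj1
        rw [show (1:ℕ) - 1 = 0 from rfl, sig_zero, U1_one, smul_zero, sub_zero,
          sig_eq_X le_rfl hk]
        simp only [smul_eq_C_mul]
        push_cast [Nat.cast_sub (show 1 ≤ k + 1 by omega), Nat.cast_sub hk]
        simp only [map_add, map_sub, map_one, map_ofNat]
        ring
      · have h2j : 2 ≤ j := by omega
        rw [sig_eq_X (show 1 ≤ j - 1 by omega) (by omega), U1_X,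
          if_pos ⟨by omega, by omega⟩, show j - 1 + 1 = j from by omega,
          sig_eq_X hj.1 hj.2]
        simp only [smul_eq_C_mul]
        push_cast [Nat.cast_sub (show j ≤ k + 1 by omega), Nat.cast_sub hj.2,
          Nat.cast_sub (show 1 ≤ j by omega)]
        simp only [map_add, map_sub, map_one, map_ofNat]
        ring
    · rw [if_neg hj, if_neg hj, if_neg hj, map_zero, map_zero]; simp
  have h2 := congrArg (fun D : Derivation ℂ WPoly WPoly => (D : WPoly →ₗ[ℂ] WPoly)) h
  simpa [Derivation.commutator_coe_linear_map, Ring.lie_def,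
    Derivation.coe_smul_linearMap, Um1der, U1der, U0der] using h2

lemma comm_Mop (L : Module.End ℂ WPoly)
    (hL : ∀ f g : WPoly, L (f * g) = f * L g + g * L f) (p : WPoly) :
    L * Mop p - Mop p * L = Mop (L p) := by
  apply LinearMap.ext; intro f
  show L (p * f) - p * L f = L p * f
  rw [hL p f]; ring

lemma Mop_smul (c : ℂ) (p : WPoly) : Mop (c • p) = c • Mop p := by
  apply LinearMap.ext; intro f
  show (c • p) * f = c • (p * f)
  rw [smul_mul_assoc]

lemma Mop_one : Mop (1 : WPoly) = 1 := by
  apply LinearMap.ext; intro f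
  show (1 : WPoly) * f = f
  rw [one_mul]

lemma key2b (k : ℕ) (hk : 1 ≤ k) :
    U0op k * Mop (X 1) - Mop (X 1) * U0op k = Mop (X 1) := by
  rw [comm_Mop _ (U0_mul k), U0_X, if_pos ⟨le_rfl, hk⟩, Nat.cast_one, one_smul]

lemma key3b (k : ℕ) (hk : 1 ≤ k) :
    Um1op k * Mop (X 1) - Mop (X 1) * Um1op k = (k : ℂ) • 1 := by
  rw [comm_Mop _ (Um1_mul k), Um1_X, if_pos ⟨le_rfl, hk⟩,
    show k + 1 - 1 = k from by omega, sig_zero, Mop_smul, Mop_one]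

lemma expand (A B : Module.End ℂ WPoly) (c : ℂ) :
    (2 • A + c • 1) * B - B * (2 • A + c • 1) = 2 • (A * B - B * A) := by
  simp only [add_mul, mul_add, smul_mul_assoc, mul_smul_comm, one_mul, mul_one, smul_sub]
  abel

lemma split (A B m : Module.End ℂ WPoly) (μ : ℂ) :
    A * (B + μ • m) - (B + μ • m) * A
      = (A * B - B * A) + μ • (A * m - m * A) := by
  simp only [mul_add, add_mul, mul_smul_comm, smul_mul_assoc, smul_sub]
  abel

end Sl2Aux

open Sl2Aux in
/-- The operators `U_{-1}`, `2U_0 + kμ` and `U_1 + μσ_1` satisfy the `sl_2` commutation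
relations `[2U_0+kμ, U_{-1}] = -2U_{-1}`, `[2U_0+kμ, U_1+μσ_1] = 2(U_1+μσ_1)` and
`[U_{-1}, U_1+μσ_1] = 2U_0 + kμ`. -/
theorem sl2_relations (k : ℕ) (hk : 1 ≤ k) (μ : ℂ) :
    ((2 • U0op k + ((k : ℂ) * μ) • (1 : Module.End ℂ WPoly)) * Um1op k -
        Um1op k * (2 • U0op k + ((k : ℂ) * μ) • (1 : Module.End ℂ WPoly)) =
      (-2 : ℂ) • Um1op k) ∧
    ((2 • U0op k + ((k : ℂ) * μ) • (1 : Module.End ℂ WPoly)) * (U1op k + μ • Mop (X 1)) -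
        (U1op k + μ • Mop (X 1)) * (2 • U0op k + ((k : ℂ) * μ) • (1 : Module.End ℂ WPoly)) =
      (2 : ℂ) • (U1op k + μ • Mop (X 1))) ∧
    (Um1op k * (U1op k + μ • Mop (X 1)) - (U1op k + μ • Mop (X 1)) * Um1op k =
      2 • U0op k + ((k : ℂ) * μ) • (1 : Module.End ℂ WPoly)) := by
  refine ⟨?_, ?_, ?_⟩
  · rw [expand, key1]
    module
  · rw [expand, split, key2a k hk, key2b k hk]
    module
  · rw [split, key3 k hk, key3b k hk]
    module
end
end

section
/- The vector field U_1 := Σ_{h=1}^k (σ_1σ_h − (h+1)σ_{h+1})∂_h (with σ_{k+1} := 0) satisfies U_1(P_σ(a)) = σ_1 P_σ(a) + ka P_σ(a) − a² P'_σ(a). -/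
open MvPolynomial Finset

noncomputable section

lemma pderiv_Ppol (k : ℕ) (a : ℂ) (h : ℕ) (hh : h ∈ Icc 1 k) :
    pderiv h (Ppol k a) = C ((-1 : ℂ) ^ h * a ^ (k - h)) := by
  rw [Ppol, map_add, pderiv_C, zero_add, map_sum]
  rw [Finset.sum_eq_single h]
  · rw [pderiv_C_mul, pderiv_X_self, mul_one]
  · intro b hb hbne
    rw [pderiv_C_mul, pderiv_X_of_ne hbne, mul_zero]
  · intro hnotin; exact absurd hh hnotin

/-- `U_1(P_σ(a)) = σ_1 P_σ(a) + k a P_σ(a) - a² P'_σ(a)`. -/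
theorem U1_on_P (k : ℕ) (hk : 1 ≤ k) (a : ℂ) :
    U1op k (Ppol k a) =
      X 1 * Ppol k a + ((k : ℂ) * a) • Ppol k a - (a ^ 2) • PpolDeriv k a := by
  have happ : U1op k (Ppol k a)
      = ∑ h ∈ Icc 1 k, (X 1 * X h - ((h + 1 : ℕ) : ℂ) • sig k (h + 1)) *
          C ((-1 : ℂ) ^ h * a ^ (k - h)) := by
    rw [U1op, LinearMap.sum_apply]
    refine Finset.sum_congr rfl fun h hh => ?_
    rw [Module.End.mul_apply]
    show Mop _ (pderiv h (Ppol k a)) = _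
    rw [pderiv_Ppol k a h hh, Mop, LinearMap.mulLeft_apply]
  -- notation: G j is the shifted summand, H j the target summand
  have hX1 : ∑ h ∈ Icc 1 k, X 1 * X h * C ((-1 : ℂ) ^ h * a ^ (k - h))
      = X 1 * (Ppol k a - C (a ^ k)) := by
    rw [Ppol, add_sub_cancel_left, mul_sum]
    exact Finset.sum_congr rfl fun h _ => by ring
  have hreidx : ∑ h ∈ Icc 1 k,
        (((h + 1 : ℕ) : ℂ) • sig k (h + 1)) * C ((-1 : ℂ) ^ h * a ^ (k - h))
      = ∑ j ∈ Icc 2 (k + 1),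
        ((j : ℕ) : ℂ) • (sig k j * C ((-1 : ℂ) ^ (j - 1) * a ^ (k + 1 - j))) := by
    rw [show (2 : ℕ) = 1 + 1 from rfl, ← Finset.map_add_right_Icc 1 k 1, Finset.sum_map]
    refine Finset.sum_congr rfl fun h _ => ?_
    simp [addRightEmbedding_apply, Nat.succ_sub_succ, smul_mul_assoc]
  have hsplit : ∑ j ∈ Icc 2 (k + 1),
        ((j : ℕ) : ℂ) • (sig k j * C ((-1 : ℂ) ^ (j - 1) * a ^ (k + 1 - j)))
      = (∑ j ∈ Icc 1 (k + 1),
          ((j : ℕ) : ℂ) • (sig k j * C ((-1 : ℂ) ^ (j - 1) * a ^ (k + 1 - j))))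
        - X 1 * C (a ^ k) := by
    have h1 : Icc 1 (k + 1) = insert 1 (Icc 2 (k + 1)) := by
      ext x; simp only [Finset.mem_Icc, Finset.mem_insert]; omega
    rw [h1, Finset.sum_insert (by simp)]
    have hG1 : ((1 : ℕ) : ℂ) • ((sig k 1) * C ((-1 : ℂ) ^ (1 - 1) * a ^ (k + 1 - 1)))
        = X 1 * C (a ^ k) := by
      rw [sig, if_neg one_ne_zero, if_pos hk]
      simp
    rw [hG1]; ring
  have hRHS : ((k : ℂ) * a) • Ppol k a - (a ^ 2) • PpolDeriv k a
      = ∑ j ∈ Icc 1 (k + 1),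
          ((j : ℕ) : ℂ) • (sig k j * C ((-1 : ℂ) ^ j * a ^ (k + 1 - j))) := by
    rw [Finset.sum_Icc_succ_top (by omega)]
    have hz : ((k + 1 : ℕ) : ℂ) • (sig k (k + 1) * C ((-1 : ℂ) ^ (k + 1) * a ^ (k + 1 - (k + 1))))
        = 0 := by
      rw [sig, if_neg (Nat.succ_ne_zero k), if_neg (by omega)]
      simp
    rw [hz, add_zero, Ppol, PpolDeriv, smul_add, smul_add, Finset.smul_sum, Finset.smul_sum,
      add_sub_add_comm]
    have hconst : ((k : ℂ) * a) • (C (a ^ k) : WPoly)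
        - (a ^ 2) • (C ((k : ℂ) * a ^ (k - 1)) : WPoly) = 0 := by
      obtain ⟨m, rfl⟩ : ∃ m, k = m + 1 := ⟨k - 1, by omega⟩
      rw [smul_eq_C_mul, smul_eq_C_mul, ← C_mul, ← C_mul, ← C_sub, Nat.add_sub_cancel]
      rw [show ((m + 1 : ℕ) : ℂ) * a * a ^ (m + 1) - a ^ 2 * (((m + 1 : ℕ) : ℂ) * a ^ m) = 0 by
        rw [pow_succ]; ring]
      exact C_0
    rw [hconst, zero_add, ← Finset.sum_sub_distrib]
    refine Finset.sum_congr rfl fun h hh => ?_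
    obtain ⟨h1, h2⟩ := Finset.mem_Icc.mp hh
    have hs : sig k h = X h := by rw [sig, if_neg (by omega), if_pos h2]
    have hcoef : (k : ℂ) * a * ((-1 : ℂ) ^ h * a ^ (k - h))
        - a ^ 2 * ((-1 : ℂ) ^ h * ((k - h : ℕ) : ℂ) * a ^ (k - h - 1))
        = ((h : ℕ) : ℂ) * ((-1 : ℂ) ^ h * a ^ (k + 1 - h)) := by
      rcases eq_or_lt_of_le h2 with rfl | hlt
      · rw [Nat.sub_self, show h + 1 - h = 1 from by omega]
        push_cast
        simp
        ring
      · obtain ⟨m, hm⟩ : ∃ m, k - h = m + 1 := ⟨k - h - 1, by omega⟩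
        have e1 : k - h - 1 = m := by omega
        have e2 : k + 1 - h = m + 2 := by omega
        have e4 : ((k : ℕ) : ℂ) = ((h : ℕ) : ℂ) + ((m : ℕ) : ℂ) + 1 := by
          have hkk : (k : ℕ) = h + (m + 1) := by omega
          rw [hkk]; push_cast; ring
        rw [e1, e2, hm, e4]; push_cast; ring
    have hC := congrArg (C : ℂ → WPoly) hcoef
    simp only [map_sub, map_mul, map_pow, map_neg, map_one, map_natCast] at hC
    rw [hs]
    simp only [smul_eq_C_mul, map_sub, map_mul, map_pow, map_neg, map_one, map_natCast]
    linear_combination (X h : WPoly) * hC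
  -- final assembly
  have hGH : ∑ j ∈ Icc 1 (k + 1),
        ((j : ℕ) : ℂ) • (sig k j * C ((-1 : ℂ) ^ j * a ^ (k + 1 - j)))
      = - ∑ j ∈ Icc 1 (k + 1),
          ((j : ℕ) : ℂ) • (sig k j * C ((-1 : ℂ) ^ (j - 1) * a ^ (k + 1 - j))) := by
    rw [← Finset.sum_neg_distrib]
    refine Finset.sum_congr rfl fun j hj => ?_
    obtain ⟨hj1, _⟩ := Finset.mem_Icc.mp hj
    obtain ⟨m, rfl⟩ : ∃ m, j = m + 1 := ⟨j - 1, by omega⟩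
    rw [Nat.add_sub_cancel, pow_succ]
    rw [show (-1 : ℂ) ^ m * -1 * a ^ (k + 1 - (m + 1)) = -((-1 : ℂ) ^ m * a ^ (k + 1 - (m + 1))) from by ring]
    simp [smul_neg]
  rw [happ]
  simp only [sub_mul]
  rw [Finset.sum_sub_distrib, hX1, hreidx, hsplit, add_sub_assoc, hRHS, hGH]
  ring

end
end

section
/- The polynomials Φ_{μ,q} satisfy: U_{−1}(Φ_{μ,q}) = (kμ + q − 1)Φ_{μ,q−1}, (U_1 + μσ_1)(Φ_{μ,q}) = (q+1)Φ_{μ,q+1}, and U_0(Φ_{μ,q}) = q·Φ_{μ,q} for all q ∈ ℕ (with Φ_{μ,−1} := 0). -/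
open MvPolynomial Finset

noncomputable section

-- ### auxiliary development


abbrev w0 : ℕ → ℕ := id

abbrev wpc (n : ℕ) : WPoly →ₗ[ℂ] WPoly := weightedHomogeneousComponent w0 n

abbrev IsWH (p : WPoly) (n : ℕ) : Prop := IsWeightedHomogeneous w0 p n

lemma wt_eq (α : ℕ →₀ ℕ) : wt α = Finsupp.weight w0 α := by
  rw [wt, Finsupp.weight_apply, Finsupp.sum]
  exact Finset.sum_congr rfl fun j _ => by simp [mul_comm]

lemma weightPart_eq (r : ℕ) (p : WPoly) : weightPart r p = wpc r p := by
  rw [weightPart, weightedHomogeneousComponent_apply]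
  apply Finset.sum_congr _ fun _ _ => rfl
  apply Finset.filter_congr
  intro d _
  simp [wt_eq]

lemma coeff_pderiv (i : ℕ) (d : ℕ →₀ ℕ) (p : WPoly) :
    coeff d (pderiv i p) = ((d i + 1 : ℕ) : ℂ) * coeff (d + Finsupp.single i 1) p := by
  induction p using MvPolynomial.induction_on' with
  | monomial s a =>
    rw [pderiv_monomial, coeff_monomial, coeff_monomial]
    by_cases hs : s = d + Finsupp.single i 1
    · subst hs
      rw [if_pos (by simp), if_pos rfl]
      simp only [Finsupp.add_apply, Finsupp.single_apply, if_pos rfl]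
      push_cast; ring
    · rw [if_neg hs, mul_zero]
      by_cases hd : s - Finsupp.single i 1 = d
      · rw [if_pos hd]
        by_cases hsi : s i = 0
        · simp [hsi]
        · exfalso
          apply hs
          rw [← hd, tsub_add_cancel_of_le]
          rw [Finsupp.single_le_iff]
          omega
      · rw [if_neg hd]
  | add p q hp hq => simp [hp, hq, mul_add]


lemma weight_add_single (d : ℕ →₀ ℕ) (i : ℕ) :
    Finsupp.weight w0 (d + Finsupp.single i 1) = Finsupp.weight w0 d + i := by
  rw [map_add]
  congr 1
  simp [Finsupp.weight_apply, Finsupp.sum_single_index]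

lemma IsWH.smulC {p : WPoly} {n : ℕ} (c : ℂ) (h : IsWH p n) : IsWH (c • p) n := by
  intro d hd
  apply h
  intro hc
  rw [coeff_smul, hc, smul_zero] at hd
  exact hd rfl

lemma IsWH.sub' {p q : WPoly} {n : ℕ} (hp : IsWH p n) (hq : IsWH q n) : IsWH (p - q) n := by
  have := (weightedHomogeneousSubmodule ℂ w0 n).sub_mem
    ((mem_weightedHomogeneousSubmodule _ _ _ _).2 hp)
    ((mem_weightedHomogeneousSubmodule _ _ _ _).2 hq)
  rwa [mem_weightedHomogeneousSubmodule] at this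

lemma pderiv_isWH {p : WPoly} {n : ℕ} (h : IsWH p n) {i m : ℕ} (hm : m + i = n) :
    IsWH ((pderiv i) p) m := by
  intro d hd
  rw [coeff_pderiv] at hd
  have h2 : coeff (d + Finsupp.single i 1) p ≠ 0 := by
    intro hc; rw [hc, mul_zero] at hd; exact hd rfl
  have := h h2
  rw [weight_add_single] at this
  omega

lemma pderiv_eq_zero {p : WPoly} {n : ℕ} (h : IsWH p n) {i : ℕ} (hi : n < i) :
    (pderiv i) p = 0 := by
  ext d
  rw [coeff_pderiv, coeff_zero]
  rcases eq_or_ne (coeff (d + Finsupp.single i 1) p) 0 with hc | hc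
  · rw [hc, mul_zero]
  · have := h hc
    rw [weight_add_single] at this
    omega

lemma sig_isWH (k h : ℕ) : IsWH (sig k h) h := by
  rw [sig]
  split_ifs with h1 h2
  · subst h1; exact isWeightedHomogeneous_one ℂ w0
  · have := isWeightedHomogeneous_X ℂ w0 h
    simpa using this
  · exact isWeightedHomogeneous_zero ℂ w0 h

lemma X_isWH (h : ℕ) : IsWH (X h) h := by
  have := isWeightedHomogeneous_X ℂ w0 h
  simpa using this

-- operator application lemmas
lemma MopDop_apply (g : WPoly) (i : ℕ) (p : WPoly) :
    (Mop g * Dop i) p = g * (pderiv i) p := rfl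

lemma Um1op_apply (k : ℕ) (p : WPoly) :
    Um1op k p = ∑ h ∈ range k, ((k - h : ℕ) : ℂ) • (sig k h * (pderiv (h+1)) p) := by
  rw [Um1op, LinearMap.sum_apply]
  exact Finset.sum_congr rfl fun h _ => rfl

lemma U0op_apply (k : ℕ) (p : WPoly) :
    U0op k p = ∑ h ∈ Icc 1 k, (h : ℂ) • (X h * (pderiv h) p) := by
  rw [U0op, LinearMap.sum_apply]
  exact Finset.sum_congr rfl fun h _ => rfl

lemma U1op_apply (k : ℕ) (p : WPoly) :
    U1op k p = ∑ h ∈ Icc 1 k,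
      (X 1 * X h - ((h + 1 : ℕ) : ℂ) • sig k (h + 1)) * (pderiv h) p := by
  rw [U1op, LinearMap.sum_apply]
  exact Finset.sum_congr rfl fun h _ => rfl

lemma Um1_isWH (k : ℕ) {p : WPoly} {n : ℕ} (h : IsWH p n) {m : ℕ} (hm : m + 1 = n) :
    IsWH (Um1op k p) m := by
  rw [Um1op_apply]
  apply IsWeightedHomogeneous.sum
  intro i _
  apply IsWH.smulC
  by_cases hi : i + 1 ≤ n
  · have h1 : IsWH ((pderiv (i+1)) p) (m - i) := pderiv_isWH h (by omega)
    have := (sig_isWH k i).mul h1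
    have he : i + (m - i) = m := by omega
    rwa [he] at this
  · rw [pderiv_eq_zero h (by omega), mul_zero]
    exact isWeightedHomogeneous_zero ℂ w0 m

lemma Um1_eq_zero (k : ℕ) {p : WPoly} (h : IsWH p 0) : Um1op k p = 0 := by
  rw [Um1op_apply]
  apply Finset.sum_eq_zero
  intro i _
  rw [pderiv_eq_zero h (by omega), mul_zero, smul_zero]

lemma U0_isWH (k : ℕ) {p : WPoly} {n : ℕ} (h : IsWH p n) : IsWH (U0op k p) n := by
  rw [U0op_apply]
  apply IsWeightedHomogeneous.sum
  intro i _
  apply IsWH.smulC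
  by_cases hi : i ≤ n
  · have h1 : IsWH ((pderiv i) p) (n - i) := pderiv_isWH h (by omega)
    have := (X_isWH i).mul h1
    have he : i + (n - i) = n := by omega
    rwa [he] at this
  · rw [pderiv_eq_zero h (by omega), mul_zero]
    exact isWeightedHomogeneous_zero ℂ w0 n

lemma U1'_isWH (k : ℕ) (μ : ℂ) {p : WPoly} {n : ℕ} (h : IsWH p n) :
    IsWH ((U1op k + μ • Mop (X 1)) p) (n + 1) := by
  rw [LinearMap.add_apply, U1op_apply]
  apply IsWeightedHomogeneous.add
  · apply IsWeightedHomogeneous.sum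
    intro i hi
    rw [Finset.mem_Icc] at hi
    have hmul : IsWH (X 1 * X i - ((i + 1 : ℕ) : ℂ) • sig k (i + 1)) (i + 1) := by
      apply IsWH.sub'
      · have := (X_isWH 1).mul (X_isWH i)
        rwa [add_comm] at this
      · exact IsWH.smulC _ (sig_isWH k (i+1))
    by_cases hin : i ≤ n
    · have h1 : IsWH ((pderiv i) p) (n - i) := pderiv_isWH h (by omega)
      have := hmul.mul h1
      have he : i + 1 + (n - i) = n + 1 := by omega
      rwa [he] at this
    · rw [pderiv_eq_zero h (by omega), mul_zero]
      exact isWeightedHomogeneous_zero ℂ w0 _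
  · have : IsWH ((X 1 : WPoly) * p) (1 + n) := (X_isWH 1).mul h
    rw [add_comm 1 n] at this
    exact IsWH.smulC μ (by exact this)


lemma X_mul_pderiv_monomial (i : ℕ) (d : ℕ →₀ ℕ) (c : ℂ) :
    (X i : WPoly) * (pderiv i) (monomial d c) = ((d i : ℕ) : ℂ) • monomial d c := by
  rw [pderiv_monomial]
  by_cases hdi : d i = 0
  · simp [hdi]
  · rw [X, monomial_mul]
    rw [smul_monomial]
    congr 1
    · rw [add_tsub_cancel_of_le]
      rw [Finsupp.single_le_iff]
      omega
    · rw [smul_eq_mul]; ring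
  
lemma U0_monomial (k : ℕ) (d : ℕ →₀ ℕ) (c : ℂ) (hd : ∀ j ∈ d.support, j ∈ Icc 1 k) :
    U0op k (monomial d c) = ((Finsupp.weight w0 d : ℕ) : ℂ) • monomial d c := by
  rw [U0op_apply]
  have : ∀ h ∈ Icc 1 k, (h : ℂ) • ((X h : WPoly) * (pderiv h) (monomial d c))
      = ((h * d h : ℕ) : ℂ) • monomial d c := by
    intro h _
    rw [X_mul_pderiv_monomial, smul_smul]
    push_cast; ring_nf
  rw [Finset.sum_congr rfl this, ← Finset.sum_smul]
  congr 1
  rw [Finsupp.weight_apply, Finsupp.sum]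
  push_cast
  rw [Finset.sum_subset hd]
  · apply Finset.sum_congr rfl
    intro j _
    simp [mul_comm]
  · intro j _ hj
    rw [Finsupp.notMem_support_iff] at hj
    simp [hj]

lemma U0_eigen (k : ℕ) {p : WPoly} {n : ℕ} (hwh : IsWH p n)
    (hv : p.vars ⊆ Icc 1 k) : U0op k p = (n : ℂ) • p := by
  conv_lhs => rw [p.as_sum]
  rw [map_sum]
  conv_rhs => rw [p.as_sum, Finset.smul_sum]
  apply Finset.sum_congr rfl
  intro d hd
  rw [U0_monomial k d _ (fun j hj => hv ((mem_vars j).2 ⟨d, hd, hj⟩))]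
  congr 2
  exact hwh (mem_support_iff.1 hd)

lemma comm_lemma (L : Module.End ℂ WPoly) (p : WPoly) (r q : ℕ)
    (h1 : wpc r (L (wpc q p)) = L (wpc q p))
    (h2 : ∀ n, n ≠ q → wpc r (L (wpc n p)) = 0) :
    wpc r (L p) = L (wpc q p) := by
  have hfin : (Function.support fun n => wpc n p).Finite :=
    weightedHomogeneousComponent_finsupp p
  have hfin2 : (Function.support fun n => L (wpc n p)).Finite := by
    apply hfin.subset
    intro n hn
    simp only [Function.mem_support] at hn ⊢
    intro hc
    rw [hc, map_zero] at hn
    exact hn rfl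
  have e1 : L (∑ᶠ m, wpc m p) = ∑ᶠ m, L (wpc m p) :=
    AddMonoidHom.map_finsum L.toAddMonoidHom hfin
  have e2 : wpc r (∑ᶠ m, L (wpc m p)) = ∑ᶠ m, wpc r (L (wpc m p)) :=
    AddMonoidHom.map_finsum (wpc r).toAddMonoidHom hfin2
  conv_lhs => rw [← sum_weightedHomogeneousComponent w0 p]
  rw [e1, e2, finsum_eq_single _ q h2, h1]

def MinWt (m : ℕ) (p : WPoly) : Prop := ∀ d ∈ p.support, m ≤ Finsupp.weight w0 d

lemma MinWt.mul {a b : ℕ} {p q : WPoly} (hp : MinWt a p) (hq : MinWt b q) :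
    MinWt (a + b) (p * q) := by
  intro d hd
  classical
  obtain ⟨d1, hd1, d2, hd2, rfl⟩ := Finset.mem_add.1 (support_mul p q hd)
  rw [map_add]
  exact add_le_add (hp d1 hd1) (hq d2 hd2)

lemma MinWt_xpoly (k : ℕ) : MinWt 1 (xpoly k) := by
  intro d hd
  by_contra hlt
  push_neg at hlt
  apply mem_support_iff.1 hd
  rw [xpoly, coeff_sum]
  apply Finset.sum_eq_zero
  intro h hh
  rw [mem_Icc] at hh
  rw [coeff_C_mul, coeff_X', if_neg, mul_zero]
  intro hcon
  have : Finsupp.weight w0 d = h := by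
    rw [← hcon]
    simp [Finsupp.weight_apply, Finsupp.sum_single_index]
  omega

lemma MinWt_xpow (k p : ℕ) : MinWt p (xpoly k ^ p) := by
  induction p with
  | zero => intro d hd; omega
  | succ n ih =>
    rw [pow_succ]
    exact ih.mul (MinWt_xpoly k)

lemma wpc_eq_zero_of_minwt {m : ℕ} {p : WPoly} (hp : MinWt m p) {r : ℕ} (hr : r < m) :
    wpc r p = 0 := by
  apply weightedHomogeneousComponent_eq_zero'
  intro d hd
  have := hp d hd
  omega


lemma vars_wpc (r : ℕ) (p : WPoly) : (wpc r p).vars ⊆ p.vars := by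
  intro j hj
  obtain ⟨d, hd, hjd⟩ := (mem_vars j).1 hj
  refine (mem_vars j).2 ⟨d, ?_, hjd⟩
  rw [mem_support_iff] at hd ⊢
  intro hc
  rw [coeff_weightedHomogeneousComponent] at hd
  apply hd
  rw [hc]; split <;> rfl

def F (k : ℕ) (μ : ℂ) (N : ℕ) : WPoly := ∑ p ∈ range (N+1), GammaC μ p • xpoly k ^ p

lemma Phi_eq (k : ℕ) (μ : ℂ) (q : ℕ) : Phi k μ q = wpc q (F k μ q) := by
  rw [Phi, weightPart_eq, F]

lemma vars_xpoly (k : ℕ) : (xpoly k).vars ⊆ Icc 1 k := by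
  refine (vars_sum_subset _ _).trans ?_
  intro j hj
  rw [Finset.mem_biUnion] at hj
  obtain ⟨h, hh, hj⟩ := hj
  have := (vars_mul _ _ hj)
  rw [Finset.mem_union] at this
  rcases this with h1 | h1
  · rw [vars_C] at h1
    exact absurd h1 (Finset.notMem_empty _)
  · rw [vars_X] at h1
    simp only [Finset.mem_singleton] at h1
    subst h1; exact hh

lemma vars_F (k : ℕ) (μ : ℂ) (N : ℕ) : (F k μ N).vars ⊆ Icc 1 k := by
  refine (vars_sum_subset _ _).trans ?_
  intro j hj
  rw [Finset.mem_biUnion] at hj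
  obtain ⟨p, _, hj⟩ := hj
  rw [smul_eq_C_mul] at hj
  have := vars_mul _ _ hj
  rw [Finset.mem_union] at this
  rcases this with h1 | h1
  · simp [vars_C] at h1
  · exact vars_xpoly k (vars_pow _ _ h1)

lemma vars_Phi (k : ℕ) (μ : ℂ) (q : ℕ) : (Phi k μ q).vars ⊆ Icc 1 k := by
  rw [Phi_eq]
  exact (vars_wpc _ _).trans (vars_F k μ q)

lemma Phi_isWH (k : ℕ) (μ : ℂ) (q : ℕ) : IsWH (Phi k μ q) q := by
  rw [Phi_eq]
  exact weightedHomogeneousComponent_isWeightedHomogeneous q _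

lemma Gamma_rec (μ : ℂ) (p : ℕ) :
    ((p : ℂ) + 1) * GammaC μ (p + 1) = -((μ + p) * GammaC μ p) := by
  have h1 : ((p.factorial : ℂ)) ≠ 0 := Nat.cast_ne_zero.2 p.factorial_ne_zero
  have h2 : (((p+1).factorial : ℂ)) ≠ 0 := Nat.cast_ne_zero.2 (p+1).factorial_ne_zero
  have h3 : ((p : ℂ) + 1) ≠ 0 := Nat.cast_add_one_ne_zero p
  rw [GammaC, GammaC, Finset.prod_range_succ, Nat.factorial_succ]
  push_cast
  field_simp
  ring

lemma pderiv_xpoly (k h : ℕ) (hh : h ∈ Icc 1 k) :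
    (pderiv h) (xpoly k) = C ((-1:ℂ)^h) := by
  rw [xpoly, map_sum, Finset.sum_eq_single h]
  · rw [pderiv_C_mul, pderiv_X_self, mul_one]
  · intro j _ hj
    rw [pderiv_C_mul, pderiv_X_of_ne hj, mul_zero]
  · intro hc
    exact absurd hh hc

lemma pderiv_xpow (k h p : ℕ) (hh : h ∈ Icc 1 k) :
    (pderiv h) (xpoly k ^ p) = ((p : ℂ) * (-1)^h) • xpoly k ^ (p-1) := by
  rw [pderiv_pow, pderiv_xpoly k h hh, smul_eq_C_mul, map_mul]
  simp only [map_natCast]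
  ring

-- test ring with smul
example (a b : ℂ) (P Q : WPoly) : a • (P * (b • Q)) = (a*b) • (P * Q) := by
  simp only [smul_eq_C_mul, map_mul, map_pow, map_neg, map_one, map_natCast, map_add, map_sub]
  ring


def Ypoly (k : ℕ) : WPoly := ∑ h ∈ Icc 1 k, ((h : ℂ) * (-1)^h) • X h
def Zpoly (k : ℕ) : WPoly := ∑ h ∈ range k, (((k - h : ℕ) : ℂ) * (-1)^(h+1)) • sig k h
def Wpoly (k : ℕ) : WPoly :=
  ∑ h ∈ Icc 1 k, ((-1:ℂ)^h) • (X 1 * X h - ((h + 1 : ℕ) : ℂ) • sig k (h+1))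

lemma Um1_xpow (k p : ℕ) :
    Um1op k (xpoly k ^ p) = (p:ℂ) • (Zpoly k * xpoly k ^ (p-1)) := by
  rw [Um1op_apply, Zpoly, Finset.sum_mul, Finset.smul_sum]
  apply Finset.sum_congr rfl
  intro h hh
  rw [Finset.mem_range] at hh
  rw [pderiv_xpow k (h+1) p (by rw [Finset.mem_Icc]; omega)]
  simp only [smul_eq_C_mul, map_mul, map_pow, map_neg, map_one, map_natCast]
  ring

lemma U0_xpow (k p : ℕ) :
    U0op k (xpoly k ^ p) = (p:ℂ) • (Ypoly k * xpoly k ^ (p-1)) := by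
  rw [U0op_apply, Ypoly, Finset.sum_mul, Finset.smul_sum]
  apply Finset.sum_congr rfl
  intro h hh
  rw [pderiv_xpow k h p hh]
  simp only [smul_eq_C_mul, map_mul, map_pow, map_neg, map_one, map_natCast]
  ring

lemma U1'_xpow (k p : ℕ) (μ : ℂ) :
    (U1op k + μ • Mop (X 1)) (xpoly k ^ p)
      = (p:ℂ) • (Wpoly k * xpoly k ^ (p-1)) + μ • (X 1 * xpoly k ^ p) := by
  rw [LinearMap.add_apply, U1op_apply, Wpoly, Finset.sum_mul, Finset.smul_sum]
  congr 1
  apply Finset.sum_congr rfl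
  intro h hh
  rw [pderiv_xpow k h p hh]
  simp only [smul_eq_C_mul, map_mul, map_pow, map_neg, map_one, map_natCast, sub_mul, mul_sub]
  ring

lemma sum_Icc_to_range (f : ℕ → WPoly) (k : ℕ) :
    ∑ h ∈ Icc 1 k, f h = ∑ h ∈ range (k+1), if h ≠ 0 then f h else 0 := by
  rw [show Icc 1 k = (range (k+1)).filter (fun h => h ≠ 0) by
    ext h; simp only [Finset.mem_Icc, Finset.mem_filter, Finset.mem_range]; omega]
  rw [Finset.sum_filter]

lemma ZYident (k : ℕ) : Zpoly k = Ypoly k - (k:ℂ) • (1 + xpoly k) := by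
  have hz : Zpoly k = ∑ h ∈ range (k+1), (((k - h : ℕ) : ℂ) * (-1)^(h+1)) • sig k h := by
    rw [Zpoly, Finset.sum_range_succ, Nat.sub_self]
    simp
  have hone : ((k:ℕ):ℂ) • (1 : WPoly)
      = ∑ h ∈ range (k+1), (if h = 0 then ((k:ℕ):ℂ) • (1:WPoly) else 0) := by
    rw [Finset.sum_ite_eq' (range (k+1)) 0 (fun _ => ((k:ℕ):ℂ) • (1:WPoly))]
    simp
  rw [hz, Ypoly, xpoly, sum_Icc_to_range, sum_Icc_to_range, smul_add, Finset.smul_sum, hone]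
  rw [eq_sub_iff_add_eq, ← Finset.sum_add_distrib, ← Finset.sum_add_distrib]
  apply Finset.sum_congr rfl
  intro h hh
  rw [Finset.mem_range] at hh
  by_cases h0 : h = 0
  · subst h0
    simp [sig]
  · rw [if_neg h0, if_pos h0, if_pos h0]
    have hsig : sig k h = X h := by
      rw [sig, if_neg h0, if_pos (by omega)]
    rw [hsig]
    simp only [smul_eq_C_mul, map_mul, map_pow, map_neg, map_one, map_natCast]
    push_cast [Nat.cast_sub (show h ≤ k by omega)]
    ring

lemma Wident (k : ℕ) (hk : 1 ≤ k) :
    Wpoly k = X 1 * xpoly k + Ypoly k + X 1 := by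
  set f : ℕ → WPoly := fun h => ((h:ℂ)*(-1)^h) • sig k h with hf
  have e1 : Wpoly k - (X 1 * xpoly k) - Ypoly k = ∑ h ∈ Icc 1 k, (f (h+1) - f h) := by
    rw [Wpoly, xpoly, Finset.mul_sum, Ypoly, ← Finset.sum_sub_distrib, ← Finset.sum_sub_distrib]
    apply Finset.sum_congr rfl
    intro h hh
    rw [Finset.mem_Icc] at hh
    have hsig : sig k h = X h := by
      rw [sig, if_neg (by omega), if_pos hh.2]
    simp only [hf, hsig]
    simp only [smul_eq_C_mul, map_mul, map_pow, map_neg, map_one, map_natCast, smul_sub,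
      mul_sub, sub_mul]
    push_cast
    ring
  have e2 : ∑ h ∈ Icc 1 k, (f (h+1) - f h) = f (k+1) - f 1 := by
    rw [← Finset.Ico_add_one_right_eq_Icc, Finset.sum_Ico_eq_sum_range]
    have := Finset.sum_range_sub (fun j => f (1 + j)) k
    rw [add_comm 1 k] at this
    exact this
  have e3 : f (k+1) = 0 := by
    simp only [hf, sig, if_neg (Nat.succ_ne_zero k), if_neg (by omega : ¬ k+1 ≤ k)]
    simp
  have e4 : f 1 = -X 1 := by
    simp only [hf, sig, if_neg one_ne_zero, if_pos hk]
    simp [smul_eq_C_mul]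
  rw [e2, e3, e4] at e1
  linear_combination e1


def Gtel (k : ℕ) (μ : ℂ) (p : ℕ) : WPoly :=
  ((k:ℂ) * (p:ℂ) * GammaC μ p) • xpoly k ^ (p-1)

def Htel (k : ℕ) (μ : ℂ) (p : ℕ) : WPoly :=
  ((p:ℂ) * GammaC μ p) • (X 1 * xpoly k ^ (p-1))

lemma pow_fix (k p : ℕ) : (p:ℂ) • (xpoly k ^ (p-1) * xpoly k) = (p:ℂ) • xpoly k ^ p := by
  cases p with
  | zero => simp
  | succ n =>
    rw [Nat.add_sub_cancel, ← pow_succ]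

lemma MAIN1 (k : ℕ) (μ : ℂ) (N : ℕ) :
    Um1op k (F k μ N)
      = ((k:ℂ)*μ) • F k μ N + U0op k (F k μ N) + Gtel k μ (N+1) := by
  have step : ∀ p : ℕ, GammaC μ p • Um1op k (xpoly k ^ p)
      = ((k:ℂ)*μ) • (GammaC μ p • xpoly k ^ p) + GammaC μ p • U0op k (xpoly k ^ p)
        + (Gtel k μ (p+1) - Gtel k μ p) := by
    intro p
    rw [Um1_xpow, U0_xpow, ZYident, Gtel, Gtel]
    have hG : (C (((p:ℂ)+1) * GammaC μ (p+1)) : WPoly) = C (-((μ + (p:ℂ)) * GammaC μ p)) :=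
      congrArg _ (Gamma_rec μ p)
    have hP2 : ((p:ℕ) : WPoly) * (xpoly k ^ (p-1) * xpoly k) = ((p:ℕ) : WPoly) * xpoly k ^ p := by
      have := pow_fix k p
      simpa [smul_eq_C_mul, map_natCast, mul_assoc] using this
    simp only [Nat.add_sub_cancel, smul_eq_C_mul, map_mul, map_pow, map_neg, map_one,
      map_natCast, map_add, map_sub, smul_sub, mul_sub, sub_mul, add_mul, mul_add, Nat.cast_add,
      Nat.cast_one] at hG ⊢
    linear_combination (-(((k:ℕ) : WPoly) * xpoly k ^ p)) * hG -
      ((k:ℕ) : WPoly) * C (GammaC μ p) * hP2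
  have tele := Finset.sum_range_sub (Gtel k μ) (N+1)
  have hG0 : Gtel k μ 0 = 0 := by simp [Gtel]
  rw [hG0, sub_zero] at tele
  rw [F, map_sum, map_sum]
  calc ∑ p ∈ range (N+1), Um1op k (GammaC μ p • xpoly k ^ p)
      = ∑ p ∈ range (N+1),
        (((k:ℂ)*μ) • (GammaC μ p • xpoly k ^ p) + GammaC μ p • U0op k (xpoly k ^ p)
          + (Gtel k μ (p+1) - Gtel k μ p)) := by
        apply Finset.sum_congr rfl
        intro p _
        rw [map_smul]
        exact step p
    _ = ((k:ℂ)*μ) • (∑ p ∈ range (N+1), GammaC μ p • xpoly k ^ p)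
          + ∑ p ∈ range (N+1), U0op k (GammaC μ p • xpoly k ^ p) + Gtel k μ (N+1) := by
        rw [Finset.sum_add_distrib, Finset.sum_add_distrib, tele, Finset.smul_sum]
        congr 1
        congr 1
        apply Finset.sum_congr rfl
        intro p _
        rw [map_smul]

lemma MAIN2 (k : ℕ) (hk : 1 ≤ k) (μ : ℂ) (N : ℕ) :
    (U1op k + μ • Mop (X 1)) (F k μ N)
      = U0op k (F k μ N) - Htel k μ (N+1) := by
  have step : ∀ p : ℕ, GammaC μ p • ((U1op k + μ • Mop (X 1)) (xpoly k ^ p))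
      = GammaC μ p • U0op k (xpoly k ^ p) + (Htel k μ p - Htel k μ (p+1)) := by
    intro p
    rw [U1'_xpow, U0_xpow, Wident k hk, Htel, Htel]
    have hG : (C (((p:ℂ)+1) * GammaC μ (p+1)) : WPoly) = C (-((μ + (p:ℂ)) * GammaC μ p)) :=
      congrArg _ (Gamma_rec μ p)
    have hP2 : ((p:ℕ) : WPoly) * (xpoly k ^ (p-1) * xpoly k) = ((p:ℕ) : WPoly) * xpoly k ^ p := by
      have := pow_fix k p
      simpa [smul_eq_C_mul, map_natCast, mul_assoc] using this
    simp only [Nat.add_sub_cancel, smul_eq_C_mul, map_mul, map_pow, map_neg, map_one,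
      map_natCast, map_add, map_sub, smul_sub, mul_sub, sub_mul, add_mul, mul_add, Nat.cast_add,
      Nat.cast_one] at hG ⊢
    linear_combination (X 1 * xpoly k ^ p) * hG + C (GammaC μ p) * X 1 * hP2
  have tele := Finset.sum_range_sub' (Htel k μ) (N+1)
  have hH0 : Htel k μ 0 = 0 := by simp [Htel]
  rw [hH0, zero_sub] at tele
  rw [F, map_sum, map_sum]
  calc ∑ p ∈ range (N+1), (U1op k + μ • Mop (X 1)) (GammaC μ p • xpoly k ^ p)
      = ∑ p ∈ range (N+1),
        (GammaC μ p • U0op k (xpoly k ^ p) + (Htel k μ p - Htel k μ (p+1))) := by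
        apply Finset.sum_congr rfl
        intro p _
        rw [map_smul]
        exact step p
    _ = ∑ p ∈ range (N+1), U0op k (GammaC μ p • xpoly k ^ p) - Htel k μ (N+1) := by
        rw [Finset.sum_add_distrib, tele]
        rw [sub_eq_add_neg]
        congr 1
        apply Finset.sum_congr rfl
        intro p _
        rw [map_smul]


lemma F_succ (k : ℕ) (μ : ℂ) (N : ℕ) :
    F k μ (N+1) = F k μ N + GammaC μ (N+1) • xpoly k ^ (N+1) :=
  Finset.sum_range_succ _ _

lemma wpc_F (k : ℕ) (μ : ℂ) {r N M : ℕ} (hrN : r ≤ N) (hNM : N ≤ M) :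
    wpc r (F k μ M) = wpc r (F k μ N) := by
  induction M, hNM using Nat.le_induction with
  | base => rfl
  | succ M hM ih =>
    rw [F_succ, map_add, map_smul, wpc_eq_zero_of_minwt (MinWt_xpow k (M+1)) (by omega),
      smul_zero, add_zero, ih]

lemma U0_Phi (k : ℕ) (μ : ℂ) (q : ℕ) :
    U0op k (Phi k μ q) = ((q:ℕ):ℂ) • Phi k μ q :=
  U0_eigen k (Phi_isWH k μ q) (vars_Phi k μ q)

lemma wpc_U0 (k : ℕ) (p : WPoly) (r : ℕ) :
    wpc r (U0op k p) = U0op k (wpc r p) := by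
  apply comm_lemma
  · exact (U0_isWH k (weightedHomogeneousComponent_isWeightedHomogeneous r
      p)).weightedHomogeneousComponent_same
  · intro n hn
    exact (U0_isWH k (weightedHomogeneousComponent_isWeightedHomogeneous n
      p)).weightedHomogeneousComponent_ne r hn.symm

lemma wpc_Um1 (k : ℕ) (p : WPoly) {q : ℕ} (hq : 1 ≤ q) :
    wpc (q-1) (Um1op k p) = Um1op k (wpc q p) := by
  apply comm_lemma
  · exact (Um1_isWH k (weightedHomogeneousComponent_isWeightedHomogeneous q p)
      (by omega)).weightedHomogeneousComponent_same
  · intro n hn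
    rcases Nat.eq_zero_or_pos n with h0 | h0
    · subst h0
      rw [Um1_eq_zero k (weightedHomogeneousComponent_isWeightedHomogeneous 0 p), map_zero]
    · exact (Um1_isWH k (weightedHomogeneousComponent_isWeightedHomogeneous n p)
        (show (n-1)+1 = n by omega)).weightedHomogeneousComponent_ne _ (by omega)

lemma wpc_U1 (k : ℕ) (μ : ℂ) (p : WPoly) (q : ℕ) :
    wpc (q+1) ((U1op k + μ • Mop (X 1)) p) = (U1op k + μ • Mop (X 1)) (wpc q p) := by
  apply comm_lemma
  · exact (U1'_isWH k μ (weightedHomogeneousComponent_isWeightedHomogeneous q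
      p)).weightedHomogeneousComponent_same
  · intro n hn
    exact (U1'_isWH k μ (weightedHomogeneousComponent_isWeightedHomogeneous n
      p)).weightedHomogeneousComponent_ne _ (by omega)

lemma MinWt_X1 : MinWt 1 (X 1 : WPoly) := by
  intro d hd
  rw [support_X, Finset.mem_singleton] at hd
  subst hd
  simp [Finsupp.weight_apply, Finsupp.sum_single_index]



/-- The polynomials `Φ_{μ,q}` satisfy `U_{-1}(Φ_{μ,q}) = (kμ+q-1) Φ_{μ,q-1}`
(with `Φ_{μ,-1} := 0`), `(U_1 + μσ_1)(Φ_{μ,q}) = (q+1) Φ_{μ,q+1}` and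
`U_0(Φ_{μ,q}) = q Φ_{μ,q}`. -/
theorem operators_on_Phi (k : ℕ) (hk : 1 ≤ k) (μ : ℂ) (q : ℕ) :
    Um1op k (Phi k μ q) =
      ((k : ℂ) * μ + q - 1) • (if q = 0 then 0 else Phi k μ (q - 1)) ∧
    (U1op k + μ • Mop (X 1)) (Phi k μ q) = ((q : ℂ) + 1) • Phi k μ (q + 1) ∧
    U0op k (Phi k μ q) = (q : ℂ) • Phi k μ q := by

  refine ⟨?_, ?_, ?_⟩
  · rcases Nat.eq_zero_or_pos q with rfl | hq
    · rw [if_pos rfl, smul_zero]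
      exact Um1_eq_zero k (Phi_isWH k μ 0)
    · rw [if_neg (by omega)]
      have h1 : wpc (q-1) (F k μ q) = Phi k μ (q-1) := by
        rw [Phi_eq]
        exact wpc_F k μ (le_refl (q-1)) (by omega)
      have h2 : wpc (q-1) (U0op k (F k μ q)) = ((q:ℂ)-1) • Phi k μ (q-1) := by
        rw [wpc_U0, h1, U0_Phi, Nat.cast_sub hq, Nat.cast_one]
      have h3 : wpc (q-1) (Gtel k μ (q+1)) = 0 := by
        rw [Gtel, map_smul, Nat.add_sub_cancel,
          wpc_eq_zero_of_minwt (MinWt_xpow k q) (by omega), smul_zero]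
      rw [Phi_eq, ← wpc_Um1 k _ hq, MAIN1 k μ q, map_add, map_add, map_smul, h1, h2, h3,
        add_zero, ← add_smul]
      congr 1
      ring
  · have h1 : wpc q (F k μ (q+1)) = Phi k μ q := by
      rw [Phi_eq]
      exact wpc_F k μ (le_refl q) (by omega)
    have h2 : wpc (q+1) (U0op k (F k μ (q+1))) = ((q:ℂ)+1) • Phi k μ (q+1) := by
      rw [wpc_U0, ← Phi_eq, U0_Phi]
      push_cast
      ring_nf
    have h3 : wpc (q+1) (Htel k μ (q+2)) = 0 := by
      have hm : MinWt (1 + (q+1)) ((X 1 : WPoly) * xpoly k ^ (q+2-1)) :=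
        MinWt_X1.mul (MinWt_xpow k (q+1))
      rw [Htel, map_smul, wpc_eq_zero_of_minwt hm (by omega), smul_zero]
    rw [← h1, ← wpc_U1, MAIN2 k hk μ (q+1), map_sub, h2, h3, sub_zero]
  · exact U0_Phi k μ q

end
end

section
/- In the Weyl algebra, for every h ∈ [2,k] one has ∂_h(U_0 + kμ − 1) + ∂_{h−1}U_{−1} = k·T^h_μ + Σ_{q=1}^{k−1} (k−q)σ_q A_{h−1, q+1}, where A_{p,q} := ∂_p∂_q − ∂_{p+1}∂_{q−1}, T^h_μ := ∂_1∂_{h−1} + ∂_h(E+μ), U_0 := Σ pσ_p∂_p, U_{−1} := Σ_{p=0}^{k−1}(k−p)σ_p∂_{p+1} (σ_0 = 1), E := Σ σ_p∂_p. -/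
open MvPolynomial Finset

noncomputable section

lemma Mop_one : Mop (1 : WPoly) = 1 := by
  refine LinearMap.ext fun f => ?_; simp [Mop]

lemma Mop_zero : Mop (0 : WPoly) = 0 := by
  refine LinearMap.ext fun f => ?_; simp [Mop]

lemma pderiv_comm' (i j : ℕ) (f : WPoly) :
    pderiv i (pderiv j f) = pderiv j (pderiv i f) := by
  induction f using MvPolynomial.induction_on with
  | C a => simp
  | add p q hp hq => simp [hp, hq]
  | mul_X p n hp =>
      have h1 : ∀ a b : ℕ, pderiv a (pderiv b (X n : WPoly)) = 0 := by
        intro a b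
        by_cases hnb : n = b
        · subst hnb; rw [pderiv_X_self]; simp
        · rw [pderiv_X_of_ne hnb]; simp
      simp only [pderiv_mul, map_add, hp, h1, mul_zero, add_zero]
      ring

lemma Dop_comm (i j : ℕ) : Dop i * Dop j = Dop j * Dop i := by
  refine LinearMap.ext fun f => ?_
  exact pderiv_comm' i j f

lemma Dop_mul_MopDop (a b : ℕ) (p : WPoly) :
    Dop a * (Mop p * Dop b) =
      Mop p * (Dop a * Dop b) + Mop (pderiv a p) * Dop b := by
  refine LinearMap.ext fun f => ?_
  simp [Dop, Mop, pderiv_mul]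
  ring

lemma dop_mul_sum (a : ℕ) (s : Finset ℕ) (c : ℕ → ℂ) (f : ℕ → WPoly) (g : ℕ → ℕ) :
    Dop a * (∑ p ∈ s, c p • (Mop (f p) * Dop (g p))) =
      (∑ p ∈ s, c p • (Mop (f p) * (Dop a * Dop (g p)))) +
        ∑ p ∈ s, c p • (Mop (pderiv a (f p)) * Dop (g p)) := by
  rw [Finset.mul_sum, ← Finset.sum_add_distrib]
  refine Finset.sum_congr rfl fun p _ => ?_
  rw [mul_smul_comm, Dop_mul_MopDop, smul_add]

lemma delta_sum (a : ℕ) (s : Finset ℕ) (ha : a ∈ s) (c : ℕ → ℂ) (g : ℕ → ℕ)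
    (f : ℕ → WPoly) (hf : ∀ p ∈ s, pderiv a (f p) = if p = a then 1 else 0) :
    ∑ p ∈ s, c p • (Mop (pderiv a (f p)) * Dop (g p)) = c a • Dop (g a) := by
  rw [Finset.sum_eq_single_of_mem a ha]
  · rw [hf a ha, if_pos rfl, Mop_one, one_mul]
  · intro p hp hpa; rw [hf p hp, if_neg hpa, Mop_zero, zero_mul, smul_zero]

lemma dop_mul_sum_delta (a : ℕ) (s : Finset ℕ) (ha : a ∈ s) (c : ℕ → ℂ)
    (f : ℕ → WPoly) (g : ℕ → ℕ)
    (hf : ∀ p ∈ s, pderiv a (f p) = if p = a then 1 else 0) :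
    Dop a * (∑ p ∈ s, c p • (Mop (f p) * Dop (g p))) =
      (∑ p ∈ s, c p • (Mop (f p) * (Dop a * Dop (g p)))) + c a • Dop (g a) := by
  rw [dop_mul_sum, delta_sum a s ha c g f hf]

/-- Formula `(E_h(μ))` : for `h ∈ [2,k]`,
`∂_h (U_0 + kμ - 1) + ∂_{h-1} U_{-1} = k T^h_μ + Σ_{q=1}^{k-1} (k-q) σ_q A_{h-1,q+1}`. -/
theorem magic_formula_Eh (k : ℕ) (hk : 1 ≤ k) (μ : ℂ) (h : ℕ) (hh : h ∈ Icc 2 k) :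
    Dop h * (U0op k + ((k : ℂ) * μ - 1) • (1 : Module.End ℂ WPoly)) +
        Dop (h - 1) * Um1op k =
      (k : ℂ) • Tmu k μ h +
        ∑ q ∈ Icc 1 (k - 1), ((k - q : ℕ) : ℂ) • (Mop (X q) * Aop (h - 1) (q + 1)) := by
  obtain ⟨h2, hkk⟩ := mem_Icc.mp hh
  have hh1 : h - 1 + 1 = h := by omega
  set s : Finset ℕ := Icc 1 (k - 1) with hs
  have hks : k ∉ s := by rw [hs, mem_Icc]; omega
  have hIcc : Icc 1 k = insert k s := by rw [hs]; ext x; simp [mem_Icc]; omega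
  have h0s : (0 : ℕ) ∉ s := by rw [hs, mem_Icc]; omega
  have hrange : range k = insert 0 s := by rw [hs]; ext x; simp [mem_Icc, mem_range]; omega
  -- expansion of ∂_h U0
  have e0 : Dop h * U0op k
      = (∑ p ∈ Icc 1 k, (p : ℂ) • (Mop (X p) * (Dop h * Dop p))) + (h : ℂ) • Dop h := by
    rw [U0op]
    exact dop_mul_sum_delta h (Icc 1 k) (by rw [mem_Icc]; omega) _ _ _ (fun p _ => by
      by_cases hph : p = h
      · subst hph; simp
      · rw [if_neg hph, pderiv_X_of_ne hph])
  -- expansion of ∂_{h-1} U_{-1}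
  have e1 : Dop (h - 1) * Um1op k
      = (∑ p ∈ range k, ((k - p : ℕ) : ℂ) • (Mop (sig k p) * (Dop (h - 1) * Dop (p + 1))))
        + ((k - (h - 1) : ℕ) : ℂ) • Dop h := by
    rw [Um1op]
    have := dop_mul_sum_delta (h - 1) (range k) (by rw [mem_range]; omega)
      (fun p => ((k - p : ℕ) : ℂ)) (fun p => sig k p) (fun p => p + 1) (fun p hp => by
        rw [mem_range] at hp
        simp only [sig]
        by_cases hp0 : p = 0
        · subst hp0
          rw [if_neg (by omega : ¬(0 = h - 1)), if_pos rfl, pderiv_one]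
        · rw [if_neg hp0, if_pos (by omega)]
          by_cases hph : p = h - 1
          · subst hph; simp
          · rw [if_neg hph, pderiv_X_of_ne hph])
    beta_reduce at this
    rw [hh1] at this
    exact this
  -- expansion of Euler operator
  have eE : Eop k = ∑ p ∈ Icc 1 k, (1 : ℂ) • (Mop (X p) * Dop p) := by
    rw [Eop]; exact Finset.sum_congr rfl fun p _ => (one_smul ℂ _).symm
  have e2 : Dop h * Eop k
      = (∑ p ∈ Icc 1 k, (1 : ℂ) • (Mop (X p) * (Dop h * Dop p))) + (1 : ℂ) • Dop h := by
    rw [eE]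
    exact dop_mul_sum_delta h (Icc 1 k) (by rw [mem_Icc]; omega) _ _ _ (fun p _ => by
      by_cases hph : p = h
      · subst hph; simp
      · rw [if_neg hph, pderiv_X_of_ne hph])
  -- cast facts
  have c1 : ((k - (h - 1) : ℕ) : ℂ) = (k : ℂ) - (h : ℂ) + 1 := by
    rw [Nat.cast_sub (by omega)]
    rw [Nat.cast_sub (by omega : 1 ≤ h)]
    push_cast; ring
  -- the two normal forms
  have lhs_eq : Dop h * (U0op k + ((k : ℂ) * μ - 1) • (1 : Module.End ℂ WPoly)) +
        Dop (h - 1) * Um1op k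
      = (∑ p ∈ s, ((p : ℂ) • (Mop (X p) * (Dop h * Dop p))
            + ((k - p : ℕ) : ℂ) • (Mop (X p) * (Dop (h - 1) * Dop (p + 1)))))
        + (k : ℂ) • (Mop (X k) * (Dop h * Dop k))
        + (k : ℂ) • (Dop 1 * Dop (h - 1))
        + ((k : ℂ) * μ + (k : ℂ)) • Dop h := by
    rw [mul_add, mul_smul_comm, mul_one, e0, e1]
    rw [hIcc, Finset.sum_insert hks, hrange, Finset.sum_insert h0s]
    rw [show sig k 0 = 1 from if_pos rfl, Mop_one, one_mul, Nat.sub_zero]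
    rw [Dop_comm (h - 1) 1]
    have hsig : ∀ p ∈ s, ((k - p : ℕ) : ℂ) • (Mop (sig k p) * (Dop (h - 1) * Dop (p + 1)))
        = ((k - p : ℕ) : ℂ) • (Mop (X p) * (Dop (h - 1) * Dop (p + 1))) := by
      intro p hp
      rw [hs, mem_Icc] at hp
      simp only [sig]
      rw [if_neg (by omega), if_pos (by omega)]
    rw [Finset.sum_congr rfl hsig]
    rw [Finset.sum_add_distrib, c1]
    module
  have hsum : (∑ p ∈ s, ((p : ℂ) • (Mop (X p) * (Dop h * Dop p))
            + ((k - p : ℕ) : ℂ) • (Mop (X p) * (Dop (h - 1) * Dop (p + 1)))))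
      = (∑ p ∈ s, (k : ℂ) • ((1 : ℂ) • (Mop (X p) * (Dop h * Dop p))))
        + ((∑ p ∈ s, ((k - p : ℕ) : ℂ) • (Mop (X p) * (Dop (h - 1) * Dop (p + 1))))
          - ∑ p ∈ s, ((k - p : ℕ) : ℂ) • (Mop (X p) * (Dop h * Dop p))) := by
    rw [← Finset.sum_sub_distrib, ← Finset.sum_add_distrib]
    refine Finset.sum_congr rfl fun p hp => ?_
    rw [hs, mem_Icc] at hp
    have hck : ((k - p : ℕ) : ℂ) = (k : ℂ) - (p : ℂ) := Nat.cast_sub (by omega)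
    rw [hck]
    module
  have rhs_eq : (k : ℂ) • Tmu k μ h +
        ∑ q ∈ s, ((k - q : ℕ) : ℂ) • (Mop (X q) * Aop (h - 1) (q + 1))
      = (∑ p ∈ s, ((p : ℂ) • (Mop (X p) * (Dop h * Dop p))
            + ((k - p : ℕ) : ℂ) • (Mop (X p) * (Dop (h - 1) * Dop (p + 1)))))
        + (k : ℂ) • (Mop (X k) * (Dop h * Dop k))
        + (k : ℂ) • (Dop 1 * Dop (h - 1))
        + ((k : ℂ) * μ + (k : ℂ)) • Dop h := by
    rw [Tmu, mul_add, mul_smul_comm, mul_one, e2]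
    have hA : ∀ q ∈ s, ((k - q : ℕ) : ℂ) • (Mop (X q) * Aop (h - 1) (q + 1))
        = ((k - q : ℕ) : ℂ) • (Mop (X q) * (Dop (h - 1) * Dop (q + 1)))
          - ((k - q : ℕ) : ℂ) • (Mop (X q) * (Dop h * Dop q)) := by
      intro q _
      rw [Aop, hh1, Nat.add_sub_cancel, mul_sub, smul_sub]
    rw [Finset.sum_congr rfl hA, Finset.sum_sub_distrib]
    rw [smul_add, smul_add, smul_add, Finset.smul_sum]
    rw [hIcc, Finset.sum_insert hks]
    rw [hsum]
    module
  rw [lhs_eq, rhs_eq]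
end
end
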